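/- The polyhedron S defined by the LP relaxation of the Alternate segment-assignment block (B1) with K = 4 segments and T = 6 time points is not an integral polytope: it has a vertex with fractional coordinates. -/

import Mathlib

set_option maxHeartbeats 1000000

noncomputable def dval : ℕ → ℕ → ℝ := fun j t =>
  if j = 0 then (if t ≤ 2 then 1 else 1/2)
  else if j = 1 then (if t = 3 ∨ t = 5 then 1/2 else 0)
  else if j = 2 then (if t = 4 then 1/2 else 0)
  else 0

noncomputable def dstar : Fin 4 → Fin 6 → ℝ := fun j t => dval j.val t.val

lemma fm4_0 (h : 0 < 4) : (⟨0, h⟩ : Fin 4) = 0 := rfl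
lemma fm4_1 (h : 1 < 4) : (⟨1, h⟩ : Fin 4) = 1 := rfl
lemma fm4_2 (h : 2 < 4) : (⟨2, h⟩ : Fin 4) = 2 := rfl
lemma fm4_3 (h : 3 < 4) : (⟨3, h⟩ : Fin 4) = 3 := rfl
lemma fm6_0 (h : 0 < 6) : (⟨0, h⟩ : Fin 6) = 0 := rfl
lemma fm6_1 (h : 1 < 6) : (⟨1, h⟩ : Fin 6) = 1 := rfl
lemma fm6_2 (h : 2 < 6) : (⟨2, h⟩ : Fin 6) = 2 := rfl
lemma fm6_3 (h : 3 < 6) : (⟨3, h⟩ : Fin 6) = 3 := rfl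
lemma fm6_4 (h : 4 < 6) : (⟨4, h⟩ : Fin 6) = 4 := rfl
lemma fm6_5 (h : 5 < 6) : (⟨5, h⟩ : Fin 6) = 5 := rfl

lemma tight_ge {a b p q : ℝ} (ha : 0 < a) (hb : 0 < b) (hp : 0 ≤ p) (hq : 0 ≤ q)
    (h : a*p + b*q = 0) : p = 0 := by nlinarith
lemma tight_le1 {a b p q : ℝ} (ha : 0 < a) (hb : 0 < b) (hab : a + b = 1)
    (hp : p ≤ 1) (hq : q ≤ 1) (h : a*p + b*q = 1) : p = 1 := by nlinarith
lemma tight_le0 {a b p q : ℝ} (ha : 0 < a) (hb : 0 < b) (hp : p ≤ 0) (hq : q ≤ 0)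
    (h : a*p + b*q = 0) : p = 0 := by nlinarith

/-- The polyhedron of the LP relaxation of the Alternate segment-assignment block (B1)
with K = 4 segments and T = 6 time points.  (0-based Lean indices.) -/
def alternateB1Polyhedron : Set (Fin 4 → Fin 6 → ℝ) :=
  {δ | (∀ t, ∑ j, δ j t = 1) ∧
    (∀ (j t : ℕ) (hj : j + 1 < 4) (ht : t + 1 < 6),
        δ ⟨j + 1, hj⟩ ⟨t + 1, ht⟩ ≤ δ ⟨j, by omega⟩ ⟨t, by omega⟩ + δ ⟨j + 1, hj⟩ ⟨t, by omega⟩) ∧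
    (∀ (t : ℕ) (ht : t + 1 < 6),
        δ ⟨0, by omega⟩ ⟨t + 1, ht⟩ ≤ δ ⟨0, by omega⟩ ⟨t, by omega⟩) ∧
    (∀ (t : ℕ) (ht : t + 1 < 6),
        δ ⟨3, by omega⟩ ⟨t, by omega⟩ ≤ δ ⟨3, by omega⟩ ⟨t + 1, ht⟩) ∧
    (∀ j t, 0 ≤ δ j t ∧ δ j t ≤ 1)}

lemma dstar_mem : dstar ∈ alternateB1Polyhedron := by
  refine ⟨?_, ?_, ?_, ?_, ?_⟩
  · intro t; fin_cases t <;>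
      · simp only [Fin.sum_univ_four]
        norm_num [dstar, dval, show ((0:Fin 4):ℕ) = 0 from rfl, show ((1:Fin 4):ℕ) = 1 from rfl, show ((2:Fin 4):ℕ) = 2 from rfl, show ((3:Fin 4):ℕ) = 3 from rfl, show ((0:Fin 6):ℕ) = 0 from rfl, show ((1:Fin 6):ℕ) = 1 from rfl, show ((2:Fin 6):ℕ) = 2 from rfl, show ((3:Fin 6):ℕ) = 3 from rfl, show ((4:Fin 6):ℕ) = 4 from rfl, show ((5:Fin 6):ℕ) = 5 from rfl]
  · intro j t hj ht
    have hj' : j < 3 := by omega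
    have ht' : t < 5 := by omega
    interval_cases j <;> interval_cases t <;> norm_num [dstar, dval]
  · intro t ht
    have ht' : t < 5 := by omega
    interval_cases t <;> norm_num [dstar, dval]
  · intro t ht
    have ht' : t < 5 := by omega
    interval_cases t <;> norm_num [dstar, dval]
  · intro j t; fin_cases j <;> fin_cases t <;> norm_num [dstar, dval]

lemma key_lemma : ∀ x₁ x₂ : Fin 4 → Fin 6 → ℝ, x₁ ∈ alternateB1Polyhedron →
    x₂ ∈ alternateB1Polyhedron → ∀ a b : ℝ, 0 < a → 0 < b → a + b = 1 →
    a • x₁ + b • x₂ = dstar → x₁ = dstar := by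
    intro x₁ x₂ hx1 hx2 a b ha hb hab hsum
    obtain ⟨hs1, hc1, hm01, hm31, hb1⟩ := hx1
    obtain ⟨hs2, hc2, hm02, hm32, hb2⟩ := hx2
    have hpt : ∀ (j : Fin 4) (t : Fin 6), a * x₁ j t + b * x₂ j t = dstar j t := by
      intro j t
      have h := congrFun (congrFun hsum j) t
      simpa using h
    have H_0_0 : a * x₁ 0 0 + b * x₂ 0 0 = 1 := by
      have h := hpt 0 0; norm_num [dstar, dval, show ((0:Fin 4):ℕ) = 0 from rfl, show ((1:Fin 4):ℕ) = 1 from rfl, show ((2:Fin 4):ℕ) = 2 from rfl, show ((3:Fin 4):ℕ) = 3 from rfl, show ((0:Fin 6):ℕ) = 0 from rfl, show ((1:Fin 6):ℕ) = 1 from rfl, show ((2:Fin 6):ℕ) = 2 from rfl, show ((3:Fin 6):ℕ) = 3 from rfl, show ((4:Fin 6):ℕ) = 4 from rfl, show ((5:Fin 6):ℕ) = 5 from rfl] at h ⊢; linarith [h]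
    have H_0_1 : a * x₁ 0 1 + b * x₂ 0 1 = 1 := by
      have h := hpt 0 1; norm_num [dstar, dval, show ((0:Fin 4):ℕ) = 0 from rfl, show ((1:Fin 4):ℕ) = 1 from rfl, show ((2:Fin 4):ℕ) = 2 from rfl, show ((3:Fin 4):ℕ) = 3 from rfl, show ((0:Fin 6):ℕ) = 0 from rfl, show ((1:Fin 6):ℕ) = 1 from rfl, show ((2:Fin 6):ℕ) = 2 from rfl, show ((3:Fin 6):ℕ) = 3 from rfl, show ((4:Fin 6):ℕ) = 4 from rfl, show ((5:Fin 6):ℕ) = 5 from rfl] at h ⊢; linarith [h]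
    have H_0_2 : a * x₁ 0 2 + b * x₂ 0 2 = 1 := by
      have h := hpt 0 2; norm_num [dstar, dval, show ((0:Fin 4):ℕ) = 0 from rfl, show ((1:Fin 4):ℕ) = 1 from rfl, show ((2:Fin 4):ℕ) = 2 from rfl, show ((3:Fin 4):ℕ) = 3 from rfl, show ((0:Fin 6):ℕ) = 0 from rfl, show ((1:Fin 6):ℕ) = 1 from rfl, show ((2:Fin 6):ℕ) = 2 from rfl, show ((3:Fin 6):ℕ) = 3 from rfl, show ((4:Fin 6):ℕ) = 4 from rfl, show ((5:Fin 6):ℕ) = 5 from rfl] at h ⊢; linarith [h]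
    have H_0_3 : a * x₁ 0 3 + b * x₂ 0 3 = (1/2) := by
      have h := hpt 0 3; norm_num [dstar, dval, show ((0:Fin 4):ℕ) = 0 from rfl, show ((1:Fin 4):ℕ) = 1 from rfl, show ((2:Fin 4):ℕ) = 2 from rfl, show ((3:Fin 4):ℕ) = 3 from rfl, show ((0:Fin 6):ℕ) = 0 from rfl, show ((1:Fin 6):ℕ) = 1 from rfl, show ((2:Fin 6):ℕ) = 2 from rfl, show ((3:Fin 6):ℕ) = 3 from rfl, show ((4:Fin 6):ℕ) = 4 from rfl, show ((5:Fin 6):ℕ) = 5 from rfl] at h ⊢; linarith [h]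
    have H_0_4 : a * x₁ 0 4 + b * x₂ 0 4 = (1/2) := by
      have h := hpt 0 4; norm_num [dstar, dval, show ((0:Fin 4):ℕ) = 0 from rfl, show ((1:Fin 4):ℕ) = 1 from rfl, show ((2:Fin 4):ℕ) = 2 from rfl, show ((3:Fin 4):ℕ) = 3 from rfl, show ((0:Fin 6):ℕ) = 0 from rfl, show ((1:Fin 6):ℕ) = 1 from rfl, show ((2:Fin 6):ℕ) = 2 from rfl, show ((3:Fin 6):ℕ) = 3 from rfl, show ((4:Fin 6):ℕ) = 4 from rfl, show ((5:Fin 6):ℕ) = 5 from rfl] at h ⊢; linarith [h]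
    have H_0_5 : a * x₁ 0 5 + b * x₂ 0 5 = (1/2) := by
      have h := hpt 0 5; norm_num [dstar, dval, show ((0:Fin 4):ℕ) = 0 from rfl, show ((1:Fin 4):ℕ) = 1 from rfl, show ((2:Fin 4):ℕ) = 2 from rfl, show ((3:Fin 4):ℕ) = 3 from rfl, show ((0:Fin 6):ℕ) = 0 from rfl, show ((1:Fin 6):ℕ) = 1 from rfl, show ((2:Fin 6):ℕ) = 2 from rfl, show ((3:Fin 6):ℕ) = 3 from rfl, show ((4:Fin 6):ℕ) = 4 from rfl, show ((5:Fin 6):ℕ) = 5 from rfl] at h ⊢; linarith [h]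
    have H_1_0 : a * x₁ 1 0 + b * x₂ 1 0 = 0 := by
      have h := hpt 1 0; norm_num [dstar, dval, show ((0:Fin 4):ℕ) = 0 from rfl, show ((1:Fin 4):ℕ) = 1 from rfl, show ((2:Fin 4):ℕ) = 2 from rfl, show ((3:Fin 4):ℕ) = 3 from rfl, show ((0:Fin 6):ℕ) = 0 from rfl, show ((1:Fin 6):ℕ) = 1 from rfl, show ((2:Fin 6):ℕ) = 2 from rfl, show ((3:Fin 6):ℕ) = 3 from rfl, show ((4:Fin 6):ℕ) = 4 from rfl, show ((5:Fin 6):ℕ) = 5 from rfl] at h ⊢; linarith [h]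
    have H_1_1 : a * x₁ 1 1 + b * x₂ 1 1 = 0 := by
      have h := hpt 1 1; norm_num [dstar, dval, show ((0:Fin 4):ℕ) = 0 from rfl, show ((1:Fin 4):ℕ) = 1 from rfl, show ((2:Fin 4):ℕ) = 2 from rfl, show ((3:Fin 4):ℕ) = 3 from rfl, show ((0:Fin 6):ℕ) = 0 from rfl, show ((1:Fin 6):ℕ) = 1 from rfl, show ((2:Fin 6):ℕ) = 2 from rfl, show ((3:Fin 6):ℕ) = 3 from rfl, show ((4:Fin 6):ℕ) = 4 from rfl, show ((5:Fin 6):ℕ) = 5 from rfl] at h ⊢; linarith [h]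
    have H_1_2 : a * x₁ 1 2 + b * x₂ 1 2 = 0 := by
      have h := hpt 1 2; norm_num [dstar, dval, show ((0:Fin 4):ℕ) = 0 from rfl, show ((1:Fin 4):ℕ) = 1 from rfl, show ((2:Fin 4):ℕ) = 2 from rfl, show ((3:Fin 4):ℕ) = 3 from rfl, show ((0:Fin 6):ℕ) = 0 from rfl, show ((1:Fin 6):ℕ) = 1 from rfl, show ((2:Fin 6):ℕ) = 2 from rfl, show ((3:Fin 6):ℕ) = 3 from rfl, show ((4:Fin 6):ℕ) = 4 from rfl, show ((5:Fin 6):ℕ) = 5 from rfl] at h ⊢; linarith [h]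
    have H_1_3 : a * x₁ 1 3 + b * x₂ 1 3 = (1/2) := by
      have h := hpt 1 3; norm_num [dstar, dval, show ((0:Fin 4):ℕ) = 0 from rfl, show ((1:Fin 4):ℕ) = 1 from rfl, show ((2:Fin 4):ℕ) = 2 from rfl, show ((3:Fin 4):ℕ) = 3 from rfl, show ((0:Fin 6):ℕ) = 0 from rfl, show ((1:Fin 6):ℕ) = 1 from rfl, show ((2:Fin 6):ℕ) = 2 from rfl, show ((3:Fin 6):ℕ) = 3 from rfl, show ((4:Fin 6):ℕ) = 4 from rfl, show ((5:Fin 6):ℕ) = 5 from rfl] at h ⊢; linarith [h]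
    have H_1_4 : a * x₁ 1 4 + b * x₂ 1 4 = 0 := by
      have h := hpt 1 4; norm_num [dstar, dval, show ((0:Fin 4):ℕ) = 0 from rfl, show ((1:Fin 4):ℕ) = 1 from rfl, show ((2:Fin 4):ℕ) = 2 from rfl, show ((3:Fin 4):ℕ) = 3 from rfl, show ((0:Fin 6):ℕ) = 0 from rfl, show ((1:Fin 6):ℕ) = 1 from rfl, show ((2:Fin 6):ℕ) = 2 from rfl, show ((3:Fin 6):ℕ) = 3 from rfl, show ((4:Fin 6):ℕ) = 4 from rfl, show ((5:Fin 6):ℕ) = 5 from rfl] at h ⊢; linarith [h]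
    have H_1_5 : a * x₁ 1 5 + b * x₂ 1 5 = (1/2) := by
      have h := hpt 1 5; norm_num [dstar, dval, show ((0:Fin 4):ℕ) = 0 from rfl, show ((1:Fin 4):ℕ) = 1 from rfl, show ((2:Fin 4):ℕ) = 2 from rfl, show ((3:Fin 4):ℕ) = 3 from rfl, show ((0:Fin 6):ℕ) = 0 from rfl, show ((1:Fin 6):ℕ) = 1 from rfl, show ((2:Fin 6):ℕ) = 2 from rfl, show ((3:Fin 6):ℕ) = 3 from rfl, show ((4:Fin 6):ℕ) = 4 from rfl, show ((5:Fin 6):ℕ) = 5 from rfl] at h ⊢; linarith [h]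
    have H_2_0 : a * x₁ 2 0 + b * x₂ 2 0 = 0 := by
      have h := hpt 2 0; norm_num [dstar, dval, show ((0:Fin 4):ℕ) = 0 from rfl, show ((1:Fin 4):ℕ) = 1 from rfl, show ((2:Fin 4):ℕ) = 2 from rfl, show ((3:Fin 4):ℕ) = 3 from rfl, show ((0:Fin 6):ℕ) = 0 from rfl, show ((1:Fin 6):ℕ) = 1 from rfl, show ((2:Fin 6):ℕ) = 2 from rfl, show ((3:Fin 6):ℕ) = 3 from rfl, show ((4:Fin 6):ℕ) = 4 from rfl, show ((5:Fin 6):ℕ) = 5 from rfl] at h ⊢; linarith [h]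
    have H_2_1 : a * x₁ 2 1 + b * x₂ 2 1 = 0 := by
      have h := hpt 2 1; norm_num [dstar, dval, show ((0:Fin 4):ℕ) = 0 from rfl, show ((1:Fin 4):ℕ) = 1 from rfl, show ((2:Fin 4):ℕ) = 2 from rfl, show ((3:Fin 4):ℕ) = 3 from rfl, show ((0:Fin 6):ℕ) = 0 from rfl, show ((1:Fin 6):ℕ) = 1 from rfl, show ((2:Fin 6):ℕ) = 2 from rfl, show ((3:Fin 6):ℕ) = 3 from rfl, show ((4:Fin 6):ℕ) = 4 from rfl, show ((5:Fin 6):ℕ) = 5 from rfl] at h ⊢; linarith [h]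
    have H_2_2 : a * x₁ 2 2 + b * x₂ 2 2 = 0 := by
      have h := hpt 2 2; norm_num [dstar, dval, show ((0:Fin 4):ℕ) = 0 from rfl, show ((1:Fin 4):ℕ) = 1 from rfl, show ((2:Fin 4):ℕ) = 2 from rfl, show ((3:Fin 4):ℕ) = 3 from rfl, show ((0:Fin 6):ℕ) = 0 from rfl, show ((1:Fin 6):ℕ) = 1 from rfl, show ((2:Fin 6):ℕ) = 2 from rfl, show ((3:Fin 6):ℕ) = 3 from rfl, show ((4:Fin 6):ℕ) = 4 from rfl, show ((5:Fin 6):ℕ) = 5 from rfl] at h ⊢; linarith [h]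
    have H_2_3 : a * x₁ 2 3 + b * x₂ 2 3 = 0 := by
      have h := hpt 2 3; norm_num [dstar, dval, show ((0:Fin 4):ℕ) = 0 from rfl, show ((1:Fin 4):ℕ) = 1 from rfl, show ((2:Fin 4):ℕ) = 2 from rfl, show ((3:Fin 4):ℕ) = 3 from rfl, show ((0:Fin 6):ℕ) = 0 from rfl, show ((1:Fin 6):ℕ) = 1 from rfl, show ((2:Fin 6):ℕ) = 2 from rfl, show ((3:Fin 6):ℕ) = 3 from rfl, show ((4:Fin 6):ℕ) = 4 from rfl, show ((5:Fin 6):ℕ) = 5 from rfl] at h ⊢; linarith [h]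
    have H_2_4 : a * x₁ 2 4 + b * x₂ 2 4 = (1/2) := by
      have h := hpt 2 4; norm_num [dstar, dval, show ((0:Fin 4):ℕ) = 0 from rfl, show ((1:Fin 4):ℕ) = 1 from rfl, show ((2:Fin 4):ℕ) = 2 from rfl, show ((3:Fin 4):ℕ) = 3 from rfl, show ((0:Fin 6):ℕ) = 0 from rfl, show ((1:Fin 6):ℕ) = 1 from rfl, show ((2:Fin 6):ℕ) = 2 from rfl, show ((3:Fin 6):ℕ) = 3 from rfl, show ((4:Fin 6):ℕ) = 4 from rfl, show ((5:Fin 6):ℕ) = 5 from rfl] at h ⊢; linarith [h]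
    have H_2_5 : a * x₁ 2 5 + b * x₂ 2 5 = 0 := by
      have h := hpt 2 5; norm_num [dstar, dval, show ((0:Fin 4):ℕ) = 0 from rfl, show ((1:Fin 4):ℕ) = 1 from rfl, show ((2:Fin 4):ℕ) = 2 from rfl, show ((3:Fin 4):ℕ) = 3 from rfl, show ((0:Fin 6):ℕ) = 0 from rfl, show ((1:Fin 6):ℕ) = 1 from rfl, show ((2:Fin 6):ℕ) = 2 from rfl, show ((3:Fin 6):ℕ) = 3 from rfl, show ((4:Fin 6):ℕ) = 4 from rfl, show ((5:Fin 6):ℕ) = 5 from rfl] at h ⊢; linarith [h]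
    have H_3_0 : a * x₁ 3 0 + b * x₂ 3 0 = 0 := by
      have h := hpt 3 0; norm_num [dstar, dval, show ((0:Fin 4):ℕ) = 0 from rfl, show ((1:Fin 4):ℕ) = 1 from rfl, show ((2:Fin 4):ℕ) = 2 from rfl, show ((3:Fin 4):ℕ) = 3 from rfl, show ((0:Fin 6):ℕ) = 0 from rfl, show ((1:Fin 6):ℕ) = 1 from rfl, show ((2:Fin 6):ℕ) = 2 from rfl, show ((3:Fin 6):ℕ) = 3 from rfl, show ((4:Fin 6):ℕ) = 4 from rfl, show ((5:Fin 6):ℕ) = 5 from rfl] at h ⊢; linarith [h]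
    have H_3_1 : a * x₁ 3 1 + b * x₂ 3 1 = 0 := by
      have h := hpt 3 1; norm_num [dstar, dval, show ((0:Fin 4):ℕ) = 0 from rfl, show ((1:Fin 4):ℕ) = 1 from rfl, show ((2:Fin 4):ℕ) = 2 from rfl, show ((3:Fin 4):ℕ) = 3 from rfl, show ((0:Fin 6):ℕ) = 0 from rfl, show ((1:Fin 6):ℕ) = 1 from rfl, show ((2:Fin 6):ℕ) = 2 from rfl, show ((3:Fin 6):ℕ) = 3 from rfl, show ((4:Fin 6):ℕ) = 4 from rfl, show ((5:Fin 6):ℕ) = 5 from rfl] at h ⊢; linarith [h]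
    have H_3_2 : a * x₁ 3 2 + b * x₂ 3 2 = 0 := by
      have h := hpt 3 2; norm_num [dstar, dval, show ((0:Fin 4):ℕ) = 0 from rfl, show ((1:Fin 4):ℕ) = 1 from rfl, show ((2:Fin 4):ℕ) = 2 from rfl, show ((3:Fin 4):ℕ) = 3 from rfl, show ((0:Fin 6):ℕ) = 0 from rfl, show ((1:Fin 6):ℕ) = 1 from rfl, show ((2:Fin 6):ℕ) = 2 from rfl, show ((3:Fin 6):ℕ) = 3 from rfl, show ((4:Fin 6):ℕ) = 4 from rfl, show ((5:Fin 6):ℕ) = 5 from rfl] at h ⊢; linarith [h]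
    have H_3_3 : a * x₁ 3 3 + b * x₂ 3 3 = 0 := by
      have h := hpt 3 3; norm_num [dstar, dval, show ((0:Fin 4):ℕ) = 0 from rfl, show ((1:Fin 4):ℕ) = 1 from rfl, show ((2:Fin 4):ℕ) = 2 from rfl, show ((3:Fin 4):ℕ) = 3 from rfl, show ((0:Fin 6):ℕ) = 0 from rfl, show ((1:Fin 6):ℕ) = 1 from rfl, show ((2:Fin 6):ℕ) = 2 from rfl, show ((3:Fin 6):ℕ) = 3 from rfl, show ((4:Fin 6):ℕ) = 4 from rfl, show ((5:Fin 6):ℕ) = 5 from rfl] at h ⊢; linarith [h]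
    have H_3_4 : a * x₁ 3 4 + b * x₂ 3 4 = 0 := by
      have h := hpt 3 4; norm_num [dstar, dval, show ((0:Fin 4):ℕ) = 0 from rfl, show ((1:Fin 4):ℕ) = 1 from rfl, show ((2:Fin 4):ℕ) = 2 from rfl, show ((3:Fin 4):ℕ) = 3 from rfl, show ((0:Fin 6):ℕ) = 0 from rfl, show ((1:Fin 6):ℕ) = 1 from rfl, show ((2:Fin 6):ℕ) = 2 from rfl, show ((3:Fin 6):ℕ) = 3 from rfl, show ((4:Fin 6):ℕ) = 4 from rfl, show ((5:Fin 6):ℕ) = 5 from rfl] at h ⊢; linarith [h]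
    have H_3_5 : a * x₁ 3 5 + b * x₂ 3 5 = 0 := by
      have h := hpt 3 5; norm_num [dstar, dval, show ((0:Fin 4):ℕ) = 0 from rfl, show ((1:Fin 4):ℕ) = 1 from rfl, show ((2:Fin 4):ℕ) = 2 from rfl, show ((3:Fin 4):ℕ) = 3 from rfl, show ((0:Fin 6):ℕ) = 0 from rfl, show ((1:Fin 6):ℕ) = 1 from rfl, show ((2:Fin 6):ℕ) = 2 from rfl, show ((3:Fin 6):ℕ) = 3 from rfl, show ((4:Fin 6):ℕ) = 4 from rfl, show ((5:Fin 6):ℕ) = 5 from rfl] at h ⊢; linarith [h]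
    have z_1_0 : x₁ 1 0 = 0 := tight_ge ha hb (hb1 1 0).1 (hb2 1 0).1 H_1_0
    have z_1_1 : x₁ 1 1 = 0 := tight_ge ha hb (hb1 1 1).1 (hb2 1 1).1 H_1_1
    have z_1_2 : x₁ 1 2 = 0 := tight_ge ha hb (hb1 1 2).1 (hb2 1 2).1 H_1_2
    have z_1_4 : x₁ 1 4 = 0 := tight_ge ha hb (hb1 1 4).1 (hb2 1 4).1 H_1_4
    have z_2_0 : x₁ 2 0 = 0 := tight_ge ha hb (hb1 2 0).1 (hb2 2 0).1 H_2_0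
    have z_2_1 : x₁ 2 1 = 0 := tight_ge ha hb (hb1 2 1).1 (hb2 2 1).1 H_2_1
    have z_2_2 : x₁ 2 2 = 0 := tight_ge ha hb (hb1 2 2).1 (hb2 2 2).1 H_2_2
    have z_2_3 : x₁ 2 3 = 0 := tight_ge ha hb (hb1 2 3).1 (hb2 2 3).1 H_2_3
    have z_2_5 : x₁ 2 5 = 0 := tight_ge ha hb (hb1 2 5).1 (hb2 2 5).1 H_2_5
    have z_3_0 : x₁ 3 0 = 0 := tight_ge ha hb (hb1 3 0).1 (hb2 3 0).1 H_3_0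
    have z_3_1 : x₁ 3 1 = 0 := tight_ge ha hb (hb1 3 1).1 (hb2 3 1).1 H_3_1
    have z_3_2 : x₁ 3 2 = 0 := tight_ge ha hb (hb1 3 2).1 (hb2 3 2).1 H_3_2
    have z_3_3 : x₁ 3 3 = 0 := tight_ge ha hb (hb1 3 3).1 (hb2 3 3).1 H_3_3
    have z_3_4 : x₁ 3 4 = 0 := tight_ge ha hb (hb1 3 4).1 (hb2 3 4).1 H_3_4
    have z_3_5 : x₁ 3 5 = 0 := tight_ge ha hb (hb1 3 5).1 (hb2 3 5).1 H_3_5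
    have o_0_0 : x₁ 0 0 = 1 := tight_le1 ha hb hab (hb1 0 0).2 (hb2 0 0).2 H_0_0
    have o_0_1 : x₁ 0 1 = 1 := tight_le1 ha hb hab (hb1 0 1).2 (hb2 0 1).2 H_0_1
    have o_0_2 : x₁ 0 2 = 1 := tight_le1 ha hb hab (hb1 0 2).2 (hb2 0 2).2 H_0_2
    -- tight segment constraints
    have c1a := hc1 0 4 (by norm_num) (by norm_num)
    have c1b := hc2 0 4 (by norm_num) (by norm_num)
    have c2a := hc1 1 3 (by norm_num) (by norm_num)
    have c2b := hc2 1 3 (by norm_num) (by norm_num)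
    norm_num [fm4_0, fm4_1, fm4_2, fm4_3, fm6_0, fm6_1, fm6_2, fm6_3, fm6_4, fm6_5] at c1a c1b c2a c2b
    have p1 : x₁ 1 5 - (x₁ 0 4 + x₁ 1 4) ≤ 0 := by linarith
    have q1 : x₂ 1 5 - (x₂ 0 4 + x₂ 1 4) ≤ 0 := by linarith
    have r1 : a * (x₁ 1 5 - (x₁ 0 4 + x₁ 1 4)) + b * (x₂ 1 5 - (x₂ 0 4 + x₂ 1 4)) = 0 := by
      linear_combination H_1_5 - H_0_4 - H_1_4
    have e1 := tight_le0 ha hb p1 q1 r1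
    have p2 : x₁ 2 4 - (x₁ 1 3 + x₁ 2 3) ≤ 0 := by linarith
    have q2 : x₂ 2 4 - (x₂ 1 3 + x₂ 2 3) ≤ 0 := by linarith
    have r2 : a * (x₁ 2 4 - (x₁ 1 3 + x₁ 2 3)) + b * (x₂ 2 4 - (x₂ 1 3 + x₂ 2 3)) = 0 := by
      linear_combination H_2_4 - H_1_3 - H_2_3
    have e2 := tight_le0 ha hb p2 q2 r2
    -- tight monotone constraints
    have d1a := hm01 3 (by norm_num)
    have d1b := hm02 3 (by norm_num)
    have d2a := hm01 4 (by norm_num)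
    have d2b := hm02 4 (by norm_num)
    norm_num [fm4_0, fm4_1, fm4_2, fm4_3, fm6_0, fm6_1, fm6_2, fm6_3, fm6_4, fm6_5] at d1a d1b d2a d2b
    have p3 : x₁ 0 4 - x₁ 0 3 ≤ 0 := by linarith
    have q3 : x₂ 0 4 - x₂ 0 3 ≤ 0 := by linarith
    have r3 : a * (x₁ 0 4 - x₁ 0 3) + b * (x₂ 0 4 - x₂ 0 3) = 0 := by
      linear_combination H_0_4 - H_0_3
    have m1 := tight_le0 ha hb p3 q3 r3
    have p4 : x₁ 0 5 - x₁ 0 4 ≤ 0 := by linarith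
    have q4 : x₂ 0 5 - x₂ 0 4 ≤ 0 := by linarith
    have r4 : a * (x₁ 0 5 - x₁ 0 4) + b * (x₂ 0 5 - x₂ 0 4) = 0 := by
      linear_combination H_0_5 - H_0_4
    have m2 := tight_le0 ha hb p4 q4 r4
    -- sums
    have s3 := hs1 3
    have s4 := hs1 4
    have s5 := hs1 5
    simp only [Fin.sum_univ_four] at s3 s4 s5
    funext j t
    fin_cases j <;> fin_cases t <;>
      · norm_num [dstar, dval, fm4_0, fm4_1, fm4_2, fm4_3, fm6_0, fm6_1, fm6_2, fm6_3, fm6_4, fm6_5, show ((0:Fin 4):ℕ) = 0 from rfl, show ((1:Fin 4):ℕ) = 1 from rfl, show ((2:Fin 4):ℕ) = 2 from rfl, show ((3:Fin 4):ℕ) = 3 from rfl, show ((0:Fin 6):ℕ) = 0 from rfl, show ((1:Fin 6):ℕ) = 1 from rfl, show ((2:Fin 6):ℕ) = 2 from rfl, show ((3:Fin 6):ℕ) = 3 from rfl, show ((4:Fin 6):ℕ) = 4 from rfl, show ((5:Fin 6):ℕ) = 5 from rfl]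
        linarith [z_1_0, z_1_1, z_1_2, z_1_4, z_2_0, z_2_1, z_2_2, z_2_3, z_2_5, z_3_0, z_3_1, z_3_2, z_3_3, z_3_4, z_3_5, o_0_0, o_0_1, o_0_2, e1, e2, m1, m2, s3, s4, s5]

/-- The polyhedron (B1) for K = 4, T = 6 is not an integral polytope: it has a vertex
(extreme point) with a fractional coordinate. -/
theorem alternateB1_not_integral :
    ∃ δ ∈ Set.extremePoints ℝ alternateB1Polyhedron,
      ∃ (j : Fin 4) (t : Fin 6), ∀ n : ℤ, δ j t ≠ (n : ℝ) := by
  refine ⟨dstar, ⟨dstar_mem, ?_⟩, 0, 3, ?_⟩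
  · intro x₁ hx1 x₂ hx2 hseg
    obtain ⟨a, b, ha, hb, hab, hsum⟩ := hseg
    exact key_lemma x₁ x₂ hx1 hx2 a b ha hb hab hsum
  · intro n hn
    have h1 : dstar 0 3 = 1/2 := by norm_num [dstar, dval, show ((0:Fin 4):ℕ) = 0 from rfl, show ((1:Fin 4):ℕ) = 1 from rfl, show ((2:Fin 4):ℕ) = 2 from rfl, show ((3:Fin 4):ℕ) = 3 from rfl, show ((0:Fin 6):ℕ) = 0 from rfl, show ((1:Fin 6):ℕ) = 1 from rfl, show ((2:Fin 6):ℕ) = 2 from rfl, show ((3:Fin 6):ℕ) = 3 from rfl, show ((4:Fin 6):ℕ) = 4 from rfl, show ((5:Fin 6):ℕ) = 5 from rfl]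
    rw [h1] at hn
    have h2 : ((2*n : ℤ) : ℝ) = 1 := by push_cast; linarith
    have h3 : (2*n : ℤ) = 1 := by exact_mod_cast h2
    omega
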